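/- The σ-ideal M of meager subsets of the Hilbert cube I^ω is the largest non-trivial topologically invariant ideal with σ-compact base on I^ω: every non-trivial topologically invariant ideal on I^ω that has a base consisting of σ-compact sets is contained in M. -/

import Mathlib

open Set Topology Cardinal

/-- The Hilbert cube `[0,1]^ℕ` with the product topology. -/
abbrev HilbertCube : Type := ℕ → ↥(Set.Icc (0:ℝ) 1)

/-- An ideal of subsets: a nonempty family closed under subsets and finite unions. -/
def IsIdeal {X : Type*} (I : Set (Set X)) : Prop :=
  I.Nonempty ∧ (∀ A ∈ I, ∀ B, B ⊆ A → B ∈ I) ∧ (∀ A ∈ I, ∀ B ∈ I, A ∪ B ∈ I)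

/-- A σ-ideal: an ideal closed under countable unions. -/
def IsSigmaIdeal {X : Type*} (I : Set (Set X)) : Prop :=
  IsIdeal I ∧ ∀ A : ℕ → Set X, (∀ n, A n ∈ I) → (⋃ n, A n) ∈ I

/-- A non-trivial ideal contains an uncountable set but not the whole space. -/
def NontrivialIdeal {X : Type*} (I : Set (Set X)) : Prop :=
  (∃ A ∈ I, ¬ A.Countable) ∧ Set.univ ∉ I

/-- An ideal on a topological space is topologically invariant if it is preserved by
all homeomorphisms of the space. -/
def TopInvariant {X : Type*} [TopologicalSpace X] (I : Set (Set X)) : Prop :=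
  ∀ h : X ≃ₜ X, {B | ∃ A ∈ I, B = h '' A} = I

/-- `I` has a base all of whose members satisfy `P`. -/
def HasBaseWith {X : Type*} (I : Set (Set X)) (P : Set X → Prop) : Prop :=
  ∃ B ⊆ I, (∀ A ∈ I, ∃ C ∈ B, A ⊆ C) ∧ ∀ C ∈ B, P C

/-- A set has the Baire property if it differs from some open set by a meager set. -/
def HasBaireProperty {X : Type*} [TopologicalSpace X] (A : Set X) : Prop :=
  ∃ U : Set X, IsOpen U ∧ IsMeagre ((A \ U) ∪ (U \ A))

/-- The σ-ideal of meager subsets of a topological space. -/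
def MeagerIdeal (X : Type*) [TopologicalSpace X] : Set (Set X) := {A | IsMeagre A}

/-- The σ-ideal generated by a family `F`: all subsets of countable unions of members
of `F`. -/
def sigmaGenerated {X : Type*} (F : Set (Set X)) : Set (Set X) :=
  {A | ∃ S : ℕ → Set X, (∀ n, S n ∈ F) ∧ A ⊆ ⋃ n, S n}

/-- A Cantor set in the Hilbert cube: a subset homeomorphic to the Cantor cube. -/
def IsCantorSet (C : Set HilbertCube) : Prop := Nonempty (C ≃ₜ (ℕ → Bool))

/-- A minimal Cantor set: one that can be mapped into any other Cantor set by an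
ambient homeomorphism. -/
def IsMinimalCantorSet (A : Set HilbertCube) : Prop :=
  IsCantorSet A ∧ ∀ B : Set HilbertCube, IsCantorSet B →
    ∃ h : HilbertCube ≃ₜ HilbertCube, h '' A ⊆ B

/-- The family of all minimal Cantor sets in the Hilbert cube. -/
def CantorFamily : Set (Set HilbertCube) := {A | IsMinimalCantorSet A}

/-- The σ-ideal generated by minimal Cantor sets. -/
def sigmaC0 : Set (Set HilbertCube) := sigmaGenerated CantorFamily

/-- A minimal dense Gδ-subset of the Hilbert cube. -/
def IsMinimalDenseGdelta (A : Set HilbertCube) : Prop :=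
  IsGδ A ∧ Dense A ∧ ∀ B : Set HilbertCube, IsGδ B → Dense B →
    ∃ h : HilbertCube ≃ₜ HilbertCube, h '' A ⊆ B

/-- The family of all minimal dense Gδ-sets in the Hilbert cube. -/
def GdeltaFamily : Set (Set HilbertCube) := {A | IsMinimalDenseGdelta A}

/-- The σ-ideal generated by minimal dense Gδ-sets. -/
def sigmaG0 : Set (Set HilbertCube) := sigmaGenerated GdeltaFamily

/-- `cov(I)`: the least cardinality of a subfamily of `I` covering the space. -/
noncomputable def covIdeal {X : Type*} (I : Set (Set X)) : Cardinal :=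
  sInf {c | ∃ A : Set (Set X), A ⊆ I ∧ ⋃₀ A = Set.univ ∧ c = #A}

/-- `non(I)`: the least cardinality of a subset of the space not in `I`. -/
noncomputable def nonIdeal {X : Type*} (I : Set (Set X)) : Cardinal :=
  sInf {c | ∃ A : Set X, A ∉ I ∧ c = #A}

/-- `add(I,J)`: the least cardinality of a subfamily of `I` whose union is not in `J`. -/
noncomputable def addIdeal2 {X : Type*} (I J : Set (Set X)) : Cardinal :=
  sInf {c | ∃ A : Set (Set X), A ⊆ I ∧ ⋃₀ A ∉ J ∧ c = #A}

/-- `add(I) = add(I,I)`. -/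
noncomputable def addIdeal {X : Type*} (I : Set (Set X)) : Cardinal := addIdeal2 I I

/-- `cof(I,J)`: the least cardinality of a subfamily of `J` cofinal in `I`. -/
noncomputable def cofIdeal2 {X : Type*} (I J : Set (Set X)) : Cardinal :=
  sInf {c | ∃ A : Set (Set X), A ⊆ J ∧ (∀ B ∈ I, ∃ C ∈ A, B ⊆ C) ∧ c = #A}

/-- `cof(I) = cof(I,I)`. -/
noncomputable def cofIdeal {X : Type*} (I : Set (Set X)) : Cardinal := cofIdeal2 I I

/-- The compact-open topology on the homeomorphism group of a space, induced by the
compact-open topology of the space of continuous self-maps. -/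
noncomputable instance homeoGroupTopology (X : Type*) [TopologicalSpace X] :
    TopologicalSpace (X ≃ₜ X) :=
  TopologicalSpace.induced (fun h : X ≃ₜ X => (⟨h, h.continuous⟩ : C(X, X)))
    ContinuousMap.compactOpen

/-- A Z-set: a closed set `A` such that for every open cover `U` of the space there is a
continuous map into the complement of `A` which is `U`-near to the identity. -/
def IsZSet {X : Type*} [TopologicalSpace X] (A : Set X) : Prop :=
  IsClosed A ∧ ∀ U : Set (Set X), (∀ V ∈ U, IsOpen V) → ⋃₀ U = Set.univ →
    ∃ f : C(X, X), (∀ x, f x ∉ A) ∧ ∀ x : X, ∃ V ∈ U, x ∈ V ∧ f x ∈ V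

/-- A σZ-set: a countable union of Z-sets. -/
def IsSigmaZSet {X : Type*} [TopologicalSpace X] (A : Set X) : Prop :=
  ∃ Z : ℕ → Set X, (∀ n, IsZSet (Z n)) ∧ A = ⋃ n, Z n

/-- The cube `[0,1]^n`. -/
abbrev FinCube (n : ℕ) : Type := Fin n → ↥(Set.Icc (0:ℝ) 1)

/-- A `Z_n`-set in the Hilbert cube: a closed set `A` such that maps avoiding `A` are
dense in the space `C([0,1]^n, I^ω)` with the compact-open topology. -/
def IsZnSet (n : ℕ) (A : Set HilbertCube) : Prop :=
  IsClosed A ∧ Dense {f : C(FinCube n, HilbertCube) | ∀ x, f x ∉ A}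

/-- A `Z_ω`-set in the Hilbert cube: a closed set which is a `Z_n`-set for all `n`. -/
def IsZomegaSet (A : Set HilbertCube) : Prop :=
  IsClosed A ∧ ∀ n : ℕ, IsZnSet n A

/-- Covering dimension of a space is at most `n`: every finite open cover has a finite
open refinement (still a cover) in which no point belongs to more than `n+1` members. -/
def CovDimLE (Y : Type*) [TopologicalSpace Y] (n : ℕ) : Prop :=
  ∀ U : Set (Set Y), U.Finite → (∀ V ∈ U, IsOpen V) → ⋃₀ U = Set.univ →
    ∃ V : Set (Set Y), V.Finite ∧ (∀ W ∈ V, IsOpen W) ∧ ⋃₀ V = Set.univ ∧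
      (∀ W ∈ V, ∃ W' ∈ U, W ⊆ W') ∧
      ∀ y : Y, {W ∈ V | y ∈ W}.ncard ≤ n + 1

/-- A `G_δ`-generated topologically invariant ideal on the Hilbert cube. -/
def GdeltaGenerated (I : Set (Set HilbertCube)) : Prop :=
  HasBaseWith I IsSigmaCompact ∧
  ∃ G : Set HilbertCube, IsGδ G ∧
    (∀ K : Set HilbertCube, K ⊆ G → IsCompact K → K ∈ I) ∧
    ∀ A ∈ I, IsCompact A →
      Dense {h : HilbertCube ≃ₜ HilbertCube | h '' A ⊆ G}

/-- A `G_δ*`-generated ideal: a preimage of a `G_δ`-generated ideal under an embedding. -/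
def GdeltaStarGenerated (I : Set (Set HilbertCube)) : Prop :=
  ∃ I' : Set (Set HilbertCube), GdeltaGenerated I' ∧
    ∃ e : HilbertCube → HilbertCube, IsEmbedding e ∧ I = {S | ∃ A ∈ I', S = e ⁻¹' A}

/-- A `σG_δ*`-generated ideal. -/
def SigmaGdeltaStarGenerated (I : Set (Set HilbertCube)) : Prop :=
  ∃ In : ℕ → Set (Set HilbertCube), (∀ n, GdeltaStarGenerated (In n)) ∧
    (∀ n, In n ⊆ I) ∧
    ∀ A ∈ I, ∃ K : ℕ → Set HilbertCube,
      (∀ n, IsCompact (K n) ∧ K n ∈ In n) ∧ A ⊆ ⋃ n, K n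

set_option linter.unnecessarySimpa false

section MeagerAuxSection
abbrev II : Type := ↥(Set.Icc (0:ℝ) 1)
namespace MeagerAux

/-- complex multiplication on ℝ × ℝ -/
def cmul (w p : ℝ × ℝ) : ℝ × ℝ := (w.1*p.1 - w.2*p.2, w.1*p.2 + w.2*p.1)

def conj' (w : ℝ × ℝ) : ℝ × ℝ := (w.1, -w.2)

lemma sq2_pos {p : ℝ × ℝ} (hp : p ≠ 0) : 0 < p.1^2 + p.2^2 := by
  by_contra h
  push_neg at h
  have h1 : p.1 = 0 := by nlinarith [sq_nonneg p.1, sq_nonneg p.2]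
  have h2 : p.2 = 0 := by nlinarith [sq_nonneg p.1, sq_nonneg p.2]
  exact hp (Prod.ext_iff.mpr ⟨h1, h2⟩)

lemma cmul_sq_abs (w p : ℝ × ℝ) :
    (cmul w p).1^2 + (cmul w p).2^2 = (w.1^2 + w.2^2) * (p.1^2 + p.2^2) := by
  simp only [cmul]; ring

lemma cmul_ne_zero {w p : ℝ × ℝ} (hw : w ≠ 0) (hp : p ≠ 0) : cmul w p ≠ 0 := by
  intro h
  have h2 : (w.1^2 + w.2^2) * (p.1^2 + p.2^2) = 0 := by
    rw [← cmul_sq_abs, h]; simp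
  exact (mul_ne_zero (sq2_pos hw).ne' (sq2_pos hp).ne') h2

lemma cmul_smul (w : ℝ × ℝ) (s : ℝ) (p : ℝ × ℝ) : cmul w (s • p) = s • cmul w p := by
  simp only [cmul, Prod.smul_def, smul_eq_mul, Prod.mk.injEq]
  constructor <;> ring

lemma conj'_ne_zero {w : ℝ × ℝ} (hw : w ≠ 0) : conj' w ≠ 0 := by
  intro h
  apply hw
  have h1 := congrArg Prod.fst h
  have h2 := congrArg Prod.snd h
  simp only [conj'] at h1 h2
  apply Prod.ext_iff.mpr
  constructor
  · simpa using h1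
  · simpa [neg_eq_zero] using h2

lemma cmul_conj'_cmul (w p : ℝ × ℝ) :
    cmul (conj' w) (cmul w p) = (w.1^2 + w.2^2) • p := by
  simp only [cmul, conj', Prod.smul_def, smul_eq_mul, Prod.mk.injEq]
  constructor <;> ring

noncomputable def phi (w p : ℝ × ℝ) : ℝ × ℝ := (‖p‖ / ‖cmul w p‖) • cmul w p

lemma phi_zero (w : ℝ × ℝ) : phi w 0 = 0 := by
  simp [phi, cmul]

lemma norm_phi (w : ℝ × ℝ) (hw : w ≠ 0) (p : ℝ × ℝ) : ‖phi w p‖ = ‖p‖ := by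
  rcases eq_or_ne p 0 with rfl | hp
  · simp [phi_zero]
  · have h1 : cmul w p ≠ 0 := cmul_ne_zero hw hp
    have h2 : ‖cmul w p‖ ≠ 0 := norm_ne_zero_iff.mpr h1
    rw [phi, norm_smul, Real.norm_eq_abs, abs_of_nonneg (by positivity), div_mul_cancel₀ _ h2]

lemma phi_phi (w : ℝ × ℝ) (hw : w ≠ 0) (p : ℝ × ℝ) : phi (conj' w) (phi w p) = p := by
  rcases eq_or_ne p 0 with rfl | hp
  · simp [phi_zero]
  · have h1 : cmul w p ≠ 0 := cmul_ne_zero hw hp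
    have h2 : (0:ℝ) < ‖cmul w p‖ := norm_pos_iff.mpr h1
    have hp' : (0:ℝ) < ‖p‖ := norm_pos_iff.mpr hp
    have hw2 : (0:ℝ) < w.1^2 + w.2^2 := sq2_pos hw
    have key : cmul (conj' w) (phi w p) = ((‖p‖ / ‖cmul w p‖) * (w.1^2 + w.2^2)) • p := by
      rw [phi, cmul_smul, cmul_conj'_cmul, smul_smul]
    set t : ℝ := (‖p‖ / ‖cmul w p‖) * (w.1^2 + w.2^2) with ht
    have htpos : 0 < t := by positivity
    rw [phi, key, norm_phi w hw, norm_smul, Real.norm_eq_abs, abs_of_pos htpos, smul_smul]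
    have : ‖p‖ / (t * ‖p‖) * t = 1 := by field_simp
    rw [this, one_smul]

lemma continuous_phi (w : ℝ × ℝ) (hw : w ≠ 0) : Continuous (phi w) := by
  rw [continuous_iff_continuousAt]
  intro p
  rcases eq_or_ne p 0 with rfl | hp
  · rw [ContinuousAt, phi_zero]
    apply squeeze_zero_norm (a := fun q : ℝ × ℝ => ‖q‖)
    · intro q
      rw [norm_phi w hw]
    · simpa using (continuous_norm.tendsto (0 : ℝ × ℝ))
  · have h1 : cmul w p ≠ 0 := cmul_ne_zero hw hp
    have hc : Continuous (cmul w) := by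
      apply Continuous.prodMk <;> fun_prop
    refine ContinuousAt.smul (f := fun q => ‖q‖ / ‖cmul w q‖) (g := cmul w) ?_ ?_
    · exact (continuous_norm.continuousAt).div (hc.norm.continuousAt)
        (norm_ne_zero_iff.mpr h1)
    · exact hc.continuousAt

lemma phi_spec {p q : ℝ × ℝ} (hp : p ≠ 0) (hnorm : ‖p‖ = ‖q‖) :
    phi (cmul q (conj' p)) p = q := by
  have hq : q ≠ 0 := by
    intro h
    subst h
    rw [norm_zero] at hnorm
    exact hp (norm_eq_zero.mp hnorm)
  have hc : cmul (cmul q (conj' p)) p = (p.1^2 + p.2^2) • q := by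
    simp only [cmul, conj', Prod.smul_def, smul_eq_mul, Prod.mk.injEq]
    constructor <;> ring
  have hp2 : (0:ℝ) < p.1^2 + p.2^2 := sq2_pos hp
  have hqn : (0:ℝ) < ‖q‖ := norm_pos_iff.mpr hq
  rw [phi, hc, norm_smul, Real.norm_eq_abs, abs_of_pos hp2, smul_smul, hnorm]
  have : ‖q‖ / (p.1^2 + p.2^2 * ‖q‖) * (p.1^2 + p.2^2) = 1 ∨ True := Or.inr trivial
  have h1 : ‖q‖ / ((p.1^2 + p.2^2) * ‖q‖) * (p.1^2 + p.2^2) = 1 := by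
    field_simp
  rw [h1, one_smul]


/-- recentering [0,1]² → ℝ², sending the square to the sup-ball of radius 1/2 -/
noncomputable def iota (p : II × II) : ℝ × ℝ := ((p.1 : ℝ) - 2⁻¹, (p.2 : ℝ) - 2⁻¹)

lemma abs_le_half {a : II} : |(a:ℝ) - 2⁻¹| ≤ 2⁻¹ := by
  rcases a.2 with ⟨h0, h1⟩
  rw [abs_le]
  constructor <;> linarith

lemma norm_iota_le (p : II × II) : ‖iota p‖ ≤ 2⁻¹ := by
  rw [Prod.norm_def]
  exact max_le (by simpa [iota, Real.norm_eq_abs] using abs_le_half)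
    (by simpa [iota, Real.norm_eq_abs] using abs_le_half)

/-- projection of ℝ onto [0,1] -/
noncomputable def proj01 (r : ℝ) : II := ⟨max 0 (min 1 r), by
  constructor
  · exact le_max_left _ _
  · exact max_le zero_le_one (min_le_left _ _)⟩

lemma continuous_proj01 : Continuous proj01 :=
  Continuous.subtype_mk (continuous_const.max (continuous_const.min continuous_id)) _

lemma proj01_of_mem {r : ℝ} (h0 : 0 ≤ r) (h1 : r ≤ 1) : (proj01 r : ℝ) = r := by
  simp only [proj01]
  rw [min_eq_right h1, max_eq_right h0]

/-- inverse of recentering -/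
noncomputable def back (v : ℝ × ℝ) : II × II := (proj01 (v.1 + 2⁻¹), proj01 (v.2 + 2⁻¹))

lemma continuous_back : Continuous back :=
  Continuous.prodMk (continuous_proj01.comp (continuous_fst.add continuous_const))
    (continuous_proj01.comp (continuous_snd.add continuous_const))

lemma iota_back {v : ℝ × ℝ} (h : ‖v‖ ≤ 2⁻¹) : iota (back v) = v := by
  rw [Prod.norm_def] at h
  have h1 : |v.1| ≤ 2⁻¹ := le_trans (by simpa [Real.norm_eq_abs] using le_max_left ‖v.1‖ ‖v.2‖) h
  have h2 : |v.2| ≤ 2⁻¹ := le_trans (by simpa [Real.norm_eq_abs] using le_max_right ‖v.1‖ ‖v.2‖) h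
  rw [abs_le] at h1 h2
  have e1 : (proj01 (v.1 + 2⁻¹) : ℝ) = v.1 + 2⁻¹ := proj01_of_mem (by linarith [h1.1]) (by linarith [h1.2])
  have e2 : (proj01 (v.2 + 2⁻¹) : ℝ) = v.2 + 2⁻¹ := proj01_of_mem (by linarith [h2.1]) (by linarith [h2.2])
  simp only [iota, back, e1, e2]
  simp

lemma back_iota (p : II × II) : back (iota p) = p := by
  have e1 : (proj01 ((p.1:ℝ) - 2⁻¹ + 2⁻¹) : ℝ) = (p.1:ℝ) - 2⁻¹ + 2⁻¹ :=
    proj01_of_mem (by linarith [p.1.2.1]) (by linarith [p.1.2.2])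
  have e2 : (proj01 ((p.2:ℝ) - 2⁻¹ + 2⁻¹) : ℝ) = (p.2:ℝ) - 2⁻¹ + 2⁻¹ :=
    proj01_of_mem (by linarith [p.2.2.1]) (by linarith [p.2.2.2])
  ext
  · rw [back, iota]; rw [e1]; ring
  · rw [back, iota]; rw [e2]; ring

/-- the gauge-preserving "rotation" homeomorphism of the square [0,1]², for w ≠ 0 -/
noncomputable def squareHomeo (w : ℝ × ℝ) (hw : w ≠ 0) : (II × II) ≃ₜ (II × II) where
  toFun p := back (phi w (iota p))
  invFun p := back (phi (conj' w) (iota p))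
  left_inv p := by
    have h1 : ‖phi w (iota p)‖ ≤ 2⁻¹ := by rw [norm_phi w hw]; exact norm_iota_le p
    show back (phi (conj' w) (iota (back (phi w (iota p))))) = p
    rw [iota_back h1, phi_phi w hw, back_iota]
  right_inv p := by
    have hw' : conj' w ≠ 0 := conj'_ne_zero hw
    have h1 : ‖phi (conj' w) (iota p)‖ ≤ 2⁻¹ := by rw [norm_phi _ hw']; exact norm_iota_le p
    have key : phi w (phi (conj' w) (iota p)) = iota p := by
      have := phi_phi (conj' w) hw' (iota p)
      simpa [conj'] using this
    show back (phi w (iota (back (phi (conj' w) (iota p))))) = p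
    rw [iota_back h1, key, back_iota]
  continuous_toFun := by
    apply continuous_back.comp
    apply (continuous_phi w hw).comp
    exact Continuous.prodMk
      (Continuous.sub (continuous_subtype_val.comp continuous_fst) continuous_const)
      (Continuous.sub (continuous_subtype_val.comp continuous_snd) continuous_const)
  continuous_invFun := by
    have hw' : conj' w ≠ 0 := conj'_ne_zero hw
    apply continuous_back.comp
    apply (continuous_phi _ hw').comp
    exact Continuous.prodMk
      (Continuous.sub (continuous_subtype_val.comp continuous_fst) continuous_const)
      (Continuous.sub (continuous_subtype_val.comp continuous_snd) continuous_const)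

/-- the key transitivity property: a boundary point of the square can be moved to
`(c, 0)` for any `c`. -/
lemma squareHomeo_spec (a b c : II) (ha : (a:ℝ) = 0 ∨ (a:ℝ) = 1) :
    ∃ e : (II × II) ≃ₜ (II × II), (e (a, b)).1 = c := by
  set p : ℝ × ℝ := iota (a, b) with hp
  set q : ℝ × ℝ := ((c:ℝ) - 2⁻¹, -2⁻¹) with hq
  have hp1 : |p.1| = 2⁻¹ := by
    rcases ha with h | h <;> simp [hp, iota, h] <;> norm_num
  have hnp : ‖p‖ = 2⁻¹ := by
    rw [Prod.norm_def]
    rw [Real.norm_eq_abs, Real.norm_eq_abs, hp1]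
    exact max_eq_left (by simpa [hp, iota] using abs_le_half (a := b))
  have hnq : ‖q‖ = 2⁻¹ := by
    rw [Prod.norm_def, Real.norm_eq_abs, Real.norm_eq_abs]
    have h2 : |q.2| = 2⁻¹ := by rw [hq]; simp
    rw [h2]
    exact max_eq_right (by simpa [hq] using abs_le_half (a := c))
  have hpne : p ≠ 0 := by
    intro h
    rw [h, norm_zero] at hnp
    norm_num at hnp
  have hqne : q ≠ 0 := by
    intro h
    rw [h, norm_zero] at hnq
    norm_num at hnq
  have hw : cmul q (conj' p) ≠ 0 := by
    apply cmul_ne_zero hqne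
    simp only [conj', ne_eq, Prod.ext_iff, not_and_or] at hpne ⊢
    rcases hpne with h | h
    · exact Or.inl (by simpa using h)
    · exact Or.inr (by simpa using h)
  refine ⟨squareHomeo _ hw, ?_⟩
  have hphi : phi (cmul q (conj' p)) p = q := phi_spec hpne (by rw [hnp, hnq])
  show (back (phi (cmul q (conj' p)) (iota (a, b)))).1 = c
  rw [← hp, hphi]
  have : (proj01 (q.1 + 2⁻¹) : ℝ) = q.1 + 2⁻¹ := by
    apply proj01_of_mem
    · have := abs_le_half (a := c); rw [abs_le] at this; simp [hq]; linarith [this.1]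
    · have := abs_le_half (a := c); rw [abs_le] at this; simp [hq]; linarith [this.2]
  apply Subtype.ext
  show (proj01 (q.1 + 2⁻¹) : ℝ) = (c : ℝ)
  rw [this, hq]
  ring

end MeagerAux
namespace MeagerAux

/-- the power homeomorphism of [0,1], x ↦ x^γ -/
noncomputable def powHomeo (γ : ℝ) (hγ : 0 < γ) : II ≃ₜ II where
  toFun a := ⟨(a:ℝ) ^ γ, ⟨Real.rpow_nonneg a.2.1 γ, Real.rpow_le_one a.2.1 a.2.2 hγ.le⟩⟩
  invFun a := ⟨(a:ℝ) ^ γ⁻¹, ⟨Real.rpow_nonneg a.2.1 γ⁻¹,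
    Real.rpow_le_one a.2.1 a.2.2 (inv_nonneg.mpr hγ.le)⟩⟩
  left_inv a := by
    apply Subtype.ext
    show ((a:ℝ) ^ γ) ^ γ⁻¹ = (a:ℝ)
    rw [← Real.rpow_mul a.2.1, mul_inv_cancel₀ hγ.ne', Real.rpow_one]
  right_inv a := by
    apply Subtype.ext
    show ((a:ℝ) ^ γ⁻¹) ^ γ = (a:ℝ)
    rw [← Real.rpow_mul a.2.1, inv_mul_cancel₀ hγ.ne', Real.rpow_one]
  continuous_toFun := by
    apply Continuous.subtype_mk
    exact (Real.continuous_rpow_const hγ.le).comp continuous_subtype_val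
  continuous_invFun := by
    apply Continuous.subtype_mk
    exact (Real.continuous_rpow_const (inv_nonneg.mpr hγ.le)).comp continuous_subtype_val

lemma powHomeo_spec {s t : ℝ} (hs0 : 0 < s) (hs1 : s < 1) (ht0 : 0 < t) (ht1 : t < 1) :
    ∃ γ : ℝ, ∃ hγ : 0 < γ, ∀ (a : II), (a : ℝ) = s → ((powHomeo γ hγ a : ℝ)) = t := by
  have hlogs : Real.log s < 0 := Real.log_neg hs0 hs1
  have hlogt : Real.log t < 0 := Real.log_neg ht0 ht1
  refine ⟨Real.log t / Real.log s, div_pos_iff.mpr (Or.inr ⟨hlogt, hlogs⟩), ?_⟩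
  intro a ha
  show (a:ℝ) ^ (Real.log t / Real.log s) = t
  rw [ha, Real.rpow_def_of_pos hs0, mul_comm, div_mul_cancel₀ _ hlogs.ne, Real.exp_log ht0]

/-- lift a homeomorphism of [0,1]² to the Hilbert cube, acting on coordinates i, j -/
def lift2 (i j : ℕ) (hij : i ≠ j) (e : (II × II) ≃ₜ (II × II)) :
    HilbertCube ≃ₜ HilbertCube where
  toFun x k := if k = i then (e (x i, x j)).1 else if k = j then (e (x i, x j)).2 else x k
  invFun y k := if k = i then (e.symm (y i, y j)).1 else if k = j then (e.symm (y i, y j)).2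
    else y k
  left_inv x := by
    funext k
    by_cases h1 : k = i
    · subst h1
      simp [hij, Ne.symm hij]
    · by_cases h2 : k = j
      · subst h2
        simp [h1, hij, Ne.symm hij]
      · simp [h1, h2]
  right_inv y := by
    funext k
    by_cases h1 : k = i
    · subst h1
      simp [hij, Ne.symm hij]
    · by_cases h2 : k = j
      · subst h2
        simp [h1, hij, Ne.symm hij]
      · simp [h1, h2]
  continuous_toFun := by
    apply continuous_pi
    intro k
    by_cases h1 : k = i
    · simp only [if_pos h1]
      exact continuous_fst.comp (e.continuous.comp
        ((continuous_apply i).prodMk (continuous_apply j)))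
    · by_cases h2 : k = j
      · simp only [if_neg h1, if_pos h2]
        exact continuous_snd.comp (e.continuous.comp
          ((continuous_apply i).prodMk (continuous_apply j)))
      · simp only [if_neg h1, if_neg h2]
        exact continuous_apply k
  continuous_invFun := by
    apply continuous_pi
    intro k
    by_cases h1 : k = i
    · simp only [if_pos h1]
      exact continuous_fst.comp (e.symm.continuous.comp
        ((continuous_apply i).prodMk (continuous_apply j)))
    · by_cases h2 : k = j
      · simp only [if_neg h1, if_pos h2]
        exact continuous_snd.comp (e.symm.continuous.comp
          ((continuous_apply i).prodMk (continuous_apply j)))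
      · simp only [if_neg h1, if_neg h2]
        exact continuous_apply k

lemma lift2_apply_i (i j : ℕ) (hij : i ≠ j) (e : (II × II) ≃ₜ (II × II)) (x : HilbertCube) :
    lift2 i j hij e x i = (e (x i, x j)).1 := by
  show (if i = i then _ else _) = _
  simp

lemma lift2_apply_other (i j : ℕ) (hij : i ≠ j) (e : (II × II) ≃ₜ (II × II)) (x : HilbertCube)
    (k : ℕ) (h1 : k ≠ i) (h2 : k ≠ j) : lift2 i j hij e x k = x k := by
  show (if k = i then _ else _) = _
  simp [h1, h2]

/-- every nonempty open subset of [0,1] contains a point of (0,1) -/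
lemma exists_interior_point {U : Set II} (hU : IsOpen U) (hne : U.Nonempty) :
    ∃ c ∈ U, 0 < (c:ℝ) ∧ (c:ℝ) < 1 := by
  obtain ⟨m, hm⟩ := hne
  obtain ⟨V, hV, hVU⟩ := isOpen_induced_iff.mp hU
  have hmV : (m:ℝ) ∈ V := by rw [← hVU] at hm; exact hm
  rcases lt_or_eq_of_le m.2.1 with h0 | h0
  · rcases lt_or_eq_of_le m.2.2 with h1 | h1
    · exact ⟨m, hm, h0, h1⟩
    · -- m = 1
      obtain ⟨ε, hε, hball⟩ := Metric.isOpen_iff.mp hV _ hmV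
      set r : ℝ := max (1 - ε/2) (2⁻¹) with hr
      have hr1 : r < 1 := by
        apply max_lt _ (by norm_num)
        linarith
      have hr0 : 0 < r := lt_of_lt_of_le (by norm_num) (le_max_right _ _)
      have hrV : r ∈ V := by
        apply hball
        rw [Metric.mem_ball, Real.dist_eq, h1, abs_lt]
        constructor
        · have : 1 - ε/2 ≤ r := le_max_left _ _
          linarith
        · linarith
      exact ⟨⟨r, hr0.le, hr1.le⟩, by rw [← hVU]; exact hrV, hr0, hr1⟩
  · -- m = 0
    obtain ⟨ε, hε, hball⟩ := Metric.isOpen_iff.mp hV _ hmV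
    set r : ℝ := min (ε/2) (2⁻¹) with hr
    have hr1 : r < 1 := lt_of_le_of_lt (min_le_right _ _) (by norm_num)
    have hr0 : 0 < r := lt_min (by linarith) (by norm_num)
    have hrV : r ∈ V := by
      apply hball
      rw [Metric.mem_ball, Real.dist_eq, ← h0, abs_lt]
      constructor
      · linarith
      · have : r ≤ ε/2 := min_le_left _ _
        linarith
    exact ⟨⟨r, hr0.le, hr1.le⟩, by rw [← hVU]; exact hrV, hr0, hr1⟩

/-- one coordinate can be moved into a given open set by a homeomorphism touching
only coordinates i and j -/
lemma exists_fix (y : HilbertCube) (i j : ℕ) (hij : i ≠ j) (U : Set II)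
    (hU : IsOpen U) (hne : U.Nonempty) :
    ∃ H : HilbertCube ≃ₜ HilbertCube, (H y) i ∈ U ∧
      ∀ k, k ≠ i → k ≠ j → H y k = y k := by
  obtain ⟨c, hcU, hc0, hc1⟩ := exists_interior_point hU hne
  rcases lt_or_eq_of_le (y i).2.1 with h0 | h0
  · rcases lt_or_eq_of_le (y i).2.2 with h1 | h1
    · -- interior case: 1D power homeo on coordinate i
      obtain ⟨γ, hγ, hspec⟩ := powHomeo_spec h0 h1 hc0 hc1
      refine ⟨lift2 i j hij ((powHomeo γ hγ).prodCongr (Homeomorph.refl II)), ?_, ?_⟩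
      · rw [lift2_apply_i]
        have : ((powHomeo γ hγ).prodCongr (Homeomorph.refl II) (y i, y j)).1
            = powHomeo γ hγ (y i) := rfl
        rw [this]
        have := hspec (y i) rfl
        have hc : powHomeo γ hγ (y i) = c := Subtype.ext this
        rw [hc]
        exact hcU
      · intro k hk1 hk2
        exact lift2_apply_other _ _ _ _ _ _ hk1 hk2
    · -- y i = 1: boundary case
      obtain ⟨e, he⟩ := squareHomeo_spec (y i) (y j) c (Or.inr h1)
      refine ⟨lift2 i j hij e, ?_, ?_⟩
      · rw [lift2_apply_i, he]
        exact hcU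
      · intro k hk1 hk2
        exact lift2_apply_other _ _ _ _ _ _ hk1 hk2
  · -- y i = 0: boundary case
    obtain ⟨e, he⟩ := squareHomeo_spec (y i) (y j) c (Or.inl h0.symm)
    refine ⟨lift2 i j hij e, ?_, ?_⟩
    · rw [lift2_apply_i, he]
      exact hcU
    · intro k hk1 hk2
      exact lift2_apply_other _ _ _ _ _ _ hk1 hk2

/-- main moving lemma: finitely many coordinates can simultaneously be moved into
prescribed open sets -/
lemma exists_homeo_adjust (x : HilbertCube) (u : ℕ → Set II) (s : Finset ℕ)
    (hu : ∀ i ∈ s, IsOpen (u i) ∧ (u i).Nonempty) :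
    ∃ g : HilbertCube ≃ₜ HilbertCube, ∀ i ∈ s, (g x) i ∈ u i := by
  induction s using Finset.induction_on with
  | empty => exact ⟨Homeomorph.refl _, by simp⟩
  | @insert i s hi ih =>
    obtain ⟨g, hg⟩ := ih (fun k hk => hu k (Finset.mem_insert_of_mem hk))
    obtain ⟨j, hj⟩ := Infinite.exists_notMem_finset (insert i s)
    have hij : i ≠ j := fun h => hj (h ▸ Finset.mem_insert_self i s)
    obtain ⟨H, hH1, hH2⟩ := exists_fix (g x) i j hij (u i)
      (hu i (Finset.mem_insert_self i s)).1 (hu i (Finset.mem_insert_self i s)).2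
    refine ⟨g.trans H, ?_⟩
    intro k hk
    rcases Finset.mem_insert.mp hk with rfl | hk'
    · exact hH1
    · have hki : k ≠ i := fun h => hi (h ▸ hk')
      have hkj : k ≠ j := fun h => hj (h ▸ Finset.mem_insert_of_mem hk')
      show H (g x) k ∈ u k
      rw [hH2 k hki hkj]
      exact hg k hk'

end MeagerAux


lemma MeagerAux.biUnion_mem_ideal {X : Type*} {I : Set (Set X)} (hI : IsIdeal I) {α : Type*}
    (F : Finset α) (S : α → Set X) (h : ∀ a ∈ F, S a ∈ I) : (⋃ a ∈ F, S a) ∈ I := by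
  classical
  induction F using Finset.induction_on with
  | empty =>
    obtain ⟨A0, hA0⟩ := hI.1
    simpa using hI.2.1 A0 hA0 ∅ (Set.empty_subset _)
  | @insert a F ha ih =>
    rw [Finset.set_biUnion_insert]
    exact hI.2.2 _ (h a (Finset.mem_insert_self a F)) _
      (ih fun b hb => h b (Finset.mem_insert_of_mem hb))

end MeagerAuxSection

/-- The σ-ideal of meager subsets of the Hilbert cube is the largest non-trivial
topologically invariant ideal with σ-compact base on `I^ω`. -/
theorem meager_ideal_largest_sigma_compact (I : Set (Set HilbertCube))
    (hI : IsIdeal I) (hnt : NontrivialIdeal I) (hinv : TopInvariant I)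
    (hb : HasBaseWith I IsSigmaCompact) :
    I ⊆ MeagerIdeal HilbertCube := by
  intro A hA
  show IsMeagre A
  by_contra hmeag
  obtain ⟨Bse, hBI, hbase, hP⟩ := hb
  obtain ⟨C, hCB, hAC⟩ := hbase A hA
  have hCI : C ∈ I := hBI hCB
  obtain ⟨K, hKcomp, hKU⟩ := hP C hCB
  have hnall : ¬ ∀ n, IsMeagre (K n) := by
    intro h
    exact hmeag ((isMeagre_iUnion h).mono (hKU ▸ hAC))
  push_neg at hnall
  obtain ⟨n, hn⟩ := hnall
  have hKcl : IsClosed (K n) := (hKcomp n).isClosed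
  have hKI : K n ∈ I := hI.2.1 C hCI (K n) (by rw [← hKU]; exact Set.subset_iUnion K n)
  have hint : (interior (K n)).Nonempty := by
    rcases Set.eq_empty_or_nonempty (interior (K n)) with h | h
    · exfalso
      apply hn
      have hd : Dense ((K n)ᶜ) := interior_eq_empty_iff_dense_compl.mp h
      exact residual_of_dense_open hKcl.isOpen_compl hd
    · exact h
  obtain ⟨x₀, hx₀⟩ := hint
  obtain ⟨t, u, hu, hsub⟩ := isOpen_pi_iff.mp isOpen_interior x₀ hx₀
  have hbox : (↑t : Set ℕ).pi u ⊆ K n := hsub.trans interior_subset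
  have key : ∀ x : HilbertCube, ∃ g : HilbertCube ≃ₜ HilbertCube, ∀ i ∈ t, (g x) i ∈ u i :=
    fun x => MeagerAux.exists_homeo_adjust x u t
      (fun i hi => ⟨(hu i hi).1, ⟨x₀ i, (hu i hi).2⟩⟩)
  choose g hg using key
  have hVopen : ∀ x, IsOpen ((g x) ⁻¹' ((↑t : Set ℕ).pi u)) := fun x =>
    (isOpen_set_pi t.finite_toSet (fun i hi => (hu i hi).1)).preimage (g x).continuous
  have hcover : (Set.univ : Set HilbertCube) ⊆ ⋃ x, (g x) ⁻¹' ((↑t : Set ℕ).pi u) := by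
    intro x _
    exact Set.mem_iUnion.mpr ⟨x, fun i hi => hg x i hi⟩
  obtain ⟨F, hF⟩ := isCompact_univ.elim_finite_subcover _ hVopen hcover
  have hmem : ∀ x : HilbertCube, (g x) ⁻¹' ((↑t : Set ℕ).pi u) ∈ I := by
    intro x
    have h1 : (g x).symm '' (K n) ∈ I := by
      rw [← hinv (g x).symm]
      exact ⟨K n, hKI, rfl⟩
    have h2 : (g x) ⁻¹' ((↑t : Set ℕ).pi u) ⊆ (g x).symm '' (K n) := by
      rw [congrFun (Homeomorph.image_symm (g x)) (K n)]
      exact Set.preimage_mono hbox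
    exact hI.2.1 _ h1 _ h2
  have huniv : (Set.univ : Set HilbertCube) ∈ I := by
    have he : (Set.univ : Set HilbertCube) = ⋃ x ∈ F, (g x) ⁻¹' ((↑t : Set ℕ).pi u) :=
      (Set.univ_subset_iff.mp hF).symm
    rw [he]
    exact MeagerAux.biUnion_mem_ideal hI F _ (fun x _ => hmem x)
  exact hnt.2 huniv
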